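/- Let E be a Banach lattice possessing a dense band decomposition (B_α)_{α∈I} with band projections P_α. Then a net (x_γ) in E is un-null if and only if for every α, (P_α(x_γ)) is un-null in B_α. -/

import Mathlib

open Filter Topology

/-- `P` is a band projection on the vector lattice `G`. -/
structure IsBandProjection {G : Type*} [Lattice G] [AddCommGroup G] [Module ℝ G]
    (P : G →ₗ[ℝ] G) : Prop where
  idem : ∀ x, P (P x) = P x
  pos : ∀ x, 0 ≤ x → 0 ≤ P x
  proj_le : ∀ x, 0 ≤ x → P x ≤ x
  disj : ∀ x, |P x| ⊓ |x - P x| = 0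

section Aux

variable {E : Type*} [NormedAddCommGroup E] [Lattice E] [HasSolidNorm E] [IsOrderedAddMonoid E]

/-- Distributive-type inequality in a lattice ordered group. -/
lemma aux_inf_add_le {a b c : E} (ha : 0 ≤ a) (hb : 0 ≤ b) (hc : 0 ≤ c) :
    a ⊓ (b + c) ≤ a ⊓ b + a ⊓ c := by
  have key : a ⊓ b + a ⊓ c = ((a + a) ⊓ (a + c)) ⊓ ((b + a) ⊓ (b + c)) := by
    rw [inf_add, add_inf, add_inf]
  rw [key]
  refine le_inf (le_inf ?_ ?_) (le_inf ?_ ?_)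
  · exact le_trans inf_le_left (le_add_of_nonneg_right ha)
  · exact le_trans inf_le_left (le_add_of_nonneg_right hc)
  · exact le_trans inf_le_left (le_add_of_nonneg_left hb)
  · exact inf_le_right

lemma aux_inf_add_le' (a b : E) {c : E} (hc : 0 ≤ c) : a ⊓ (b + c) ≤ a ⊓ b + c := by
  rw [← sub_le_iff_le_add, sub_eq_add_neg, inf_add]
  exact inf_le_inf (by simpa [sub_eq_add_neg] using sub_le_self a hc) (by simp)

lemma aux_inf_sum_le {a : E} (ha : 0 ≤ a) {β : Type*} (s : Finset β) (g : β → E)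
    (hg : ∀ w ∈ s, 0 ≤ g w) : a ⊓ (∑ w ∈ s, g w) ≤ ∑ w ∈ s, a ⊓ g w := by
  classical
  induction s using Finset.cons_induction with
  | empty => simp [inf_of_le_right (le_refl (0:E) |>.trans ha)]
  | cons i s hi ih =>
      rw [Finset.sum_cons, Finset.sum_cons]
      calc a ⊓ (g i + ∑ w ∈ s, g w) ≤ a ⊓ g i + a ⊓ (∑ w ∈ s, g w) :=
            aux_inf_add_le ha (hg i (Finset.mem_cons_self i s))
              (Finset.sum_nonneg fun w hw => hg w (Finset.mem_cons_of_mem hw))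
        _ ≤ a ⊓ g i + ∑ w ∈ s, a ⊓ g w :=
            add_le_add_right (ih fun w hw => hg w (Finset.mem_cons_of_mem hw)) _

lemma aux_abs_sum_le {β : Type*} (s : Finset β) (g : β → E) :
    |∑ w ∈ s, g w| ≤ ∑ w ∈ s, |g w| := by
  classical
  induction s using Finset.cons_induction with
  | empty => simp
  | cons i s hi ih =>
      rw [Finset.sum_cons, Finset.sum_cons]
      exact le_trans (abs_add_le _ _) (add_le_add_right ih _)

variable [Module ℝ E] {P : E →ₗ[ℝ] E}

lemma IsBandProjection.proj_inf_compl (hp : IsBandProjection P) {x y : E}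
    (hx : 0 ≤ x) (hy : 0 ≤ y) : P x ⊓ (y - P y) = 0 := by
  have h1 : 0 ≤ P x := hp.pos x hx
  have h2 : 0 ≤ y - P y := sub_nonneg.2 (hp.proj_le y hy)
  have hd := hp.disj (x + y)
  rw [map_add] at hd
  have e1 : |P x + P y| = P x + P y := abs_of_nonneg (add_nonneg h1 (hp.pos y hy))
  have e2 : |x + y - (P x + P y)| = (x - P x) + (y - P y) := by
    rw [show x + y - (P x + P y) = (x - P x) + (y - P y) by abel]
    exact abs_of_nonneg (add_nonneg (sub_nonneg.2 (hp.proj_le x hx)) h2)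
  rw [e1, e2] at hd
  refine le_antisymm ?_ (le_inf h1 h2)
  calc P x ⊓ (y - P y) ≤ (P x + P y) ⊓ ((x - P x) + (y - P y)) :=
        inf_le_inf (le_add_of_nonneg_right (hp.pos y hy))
          (le_add_of_nonneg_left (sub_nonneg.2 (hp.proj_le x hx)))
    _ = 0 := hd

lemma IsBandProjection.abs_map_le (hp : IsBandProjection P) (x : E) : |P x| ≤ P |x| := by
  have h1 : P x = P x⁺ - P x⁻ := by rw [← map_sub, posPart_sub_negPart]
  have h2 : P |x| = P x⁺ + P x⁻ := by rw [← map_add, posPart_add_negPart]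
  rw [h1, h2]
  calc |P x⁺ - P x⁻| ≤ |P x⁺| + |P x⁻| := by
        simpa [sub_eq_add_neg] using abs_add_le (P x⁺) (-(P x⁻))
    _ = P x⁺ + P x⁻ := by
        rw [abs_of_nonneg (hp.pos _ (posPart_nonneg x)),
          abs_of_nonneg (hp.pos _ (negPart_nonneg x))]

lemma IsBandProjection.abs_mem_range (hp : IsBandProjection P) {w : E}
    (hw : w ∈ Set.range P) : |w| = P |w| := by
  obtain ⟨y, rfl⟩ := hw
  have h1 : |P y| ≤ P |y| := hp.abs_map_le y
  have h2 : |P y| - P |P y| ≤ P |y| :=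
    le_trans (sub_le_self _ (hp.pos _ (abs_nonneg _))) h1
  have hd : P |y| ⊓ (|P y| - P |P y|) = 0 :=
    hp.proj_inf_compl (abs_nonneg y) (abs_nonneg (P y))
  have h0 : |P y| - P |P y| = 0 := (inf_eq_right.2 h2).symm.trans hd
  rw [sub_eq_zero] at h0
  exact h0

/-- The key reduction: for `v` a nonnegative element of the range of `P`,
`|x| ⊓ v ≤ |P x| ⊓ v`. -/
lemma IsBandProjection.inf_le_proj_inf (hp : IsBandProjection P) {v : E}
    (hv : v ∈ Set.range P) (hv0 : 0 ≤ v) (x : E) : |x| ⊓ v ≤ |P x| ⊓ v := by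
  have hPv : P v = v := by obtain ⟨y, rfl⟩ := hv; exact hp.idem y
  have habs : |x - P x| ≤ |x| - P |x| := by
    have e : x - P x = (x⁺ - P x⁺) - (x⁻ - P x⁻) := by
      rw [show (x⁺ - P x⁺) - (x⁻ - P x⁻) = (x⁺ - x⁻) - (P x⁺ - P x⁻) by abel,
        ← map_sub, posPart_sub_negPart]
    have e2 : |x| - P |x| = (x⁺ - P x⁺) + (x⁻ - P x⁻) := by
      rw [show (x⁺ - P x⁺) + (x⁻ - P x⁻) = (x⁺ + x⁻) - (P x⁺ + P x⁻) by abel,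
        ← map_add, posPart_add_negPart]
    rw [e, e2]
    calc |(x⁺ - P x⁺) - (x⁻ - P x⁻)|
          = |(x⁺ - P x⁺) + (-(x⁻ - P x⁻))| := by rw [sub_eq_add_neg]
      _ ≤ |x⁺ - P x⁺| + |-(x⁻ - P x⁻)| := abs_add_le _ _
      _ = |x⁺ - P x⁺| + |x⁻ - P x⁻| := by rw [abs_neg]
      _ = (x⁺ - P x⁺) + (x⁻ - P x⁻) := by
          rw [abs_of_nonneg (sub_nonneg.2 (hp.proj_le _ (posPart_nonneg x))),
            abs_of_nonneg (sub_nonneg.2 (hp.proj_le _ (negPart_nonneg x)))]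
  have hcompl0 : 0 ≤ |x| - P |x| := sub_nonneg.2 (hp.proj_le _ (abs_nonneg x))
  have h1 : |x| ≤ |P x| + (|x| - P |x|) := by
    calc |x| = |P x + (x - P x)| := by rw [add_sub_cancel]
      _ ≤ |P x| + |x - P x| := abs_add_le _ _
      _ ≤ |P x| + (|x| - P |x|) := add_le_add_right habs _
  have h2 : v ⊓ (|x| - P |x|) = 0 := by
    have := hp.proj_inf_compl hv0 (abs_nonneg x)
    rwa [hPv] at this
  calc |x| ⊓ v ≤ (|P x| + (|x| - P |x|)) ⊓ v := inf_le_inf_right v h1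
    _ = v ⊓ (|P x| + (|x| - P |x|)) := inf_comm _ _
    _ ≤ v ⊓ |P x| + v ⊓ (|x| - P |x|) := aux_inf_add_le hv0 (abs_nonneg _) hcompl0
    _ = v ⊓ |P x| := by rw [h2, add_zero]
    _ = |P x| ⊓ v := inf_comm _ _

end Aux

/-- if a Banach lattice `E` has a dense band decomposition given
by band projections `(P_α)` (pairwise disjoint bands `B_α = range P_α` with
norm dense linear span), then a net `(x_γ)` in `E` is un-null iff for every
`α` the net `(P_α x_γ)` is un-null in the band `B_α`. -/
theorem unNull_iff_unNull_bands
    {E : Type*} [NormedAddCommGroup E] [Lattice E] [HasSolidNorm E] [IsOrderedAddMonoid E] [NormedSpace ℝ E] [CompleteSpace E]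
    {I : Type*} (P : I → E →ₗ[ℝ] E) (hP : ∀ α, IsBandProjection (P α))
    (hdisj : ∀ α β, α ≠ β → ∀ a ∈ Set.range (P α), ∀ b ∈ Set.range (P β), |a| ⊓ |b| = 0)
    (hdense : Dense (Submodule.span ℝ (⋃ α, Set.range (P α)) : Set E))
    {ι : Type*} [Preorder ι] [Nonempty ι] [IsDirected ι (· ≤ ·)] (x : ι → E) :
    (∀ v : E, 0 ≤ v → Tendsto (fun γ => ‖|x γ| ⊓ v‖) atTop (nhds 0)) ↔
      ∀ α, ∀ v ∈ Set.range (P α), 0 ≤ v →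
        Tendsto (fun γ => ‖|P α (x γ)| ⊓ v‖) atTop (nhds 0) := by
  constructor
  · intro h α v hv hv0
    have hb : ∀ γ, ‖|P α (x γ)| ⊓ v‖ ≤ ‖|x γ| ⊓ v‖ := by
      intro γ
      have h1 : 0 ≤ |P α (x γ)| ⊓ v := le_inf (abs_nonneg _) hv0
      have h2 : |P α (x γ)| ⊓ v ≤ |x γ| ⊓ v :=
        inf_le_inf_right v (le_trans ((hP α).abs_map_le _)
          ((hP α).proj_le _ (abs_nonneg _)))
      refine HasSolidNorm.solid ?_
      rw [abs_of_nonneg h1, abs_of_nonneg (le_trans h1 h2)]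
      exact h2
    exact squeeze_zero (fun γ => norm_nonneg _) hb (h v hv0)
  · intro h v hv0
    rw [Metric.tendsto_nhds]
    intro ε hε
    obtain ⟨u, hu, hud⟩ := Metric.mem_closure_iff.1 (hdense v) (ε/2) (by positivity)
    have hu' : u ∈ Submodule.span ℝ (⋃ α, Set.range ⇑(P α)) := hu
    obtain ⟨c, hsupp, hsum⟩ := Submodule.mem_span_set.1 hu'
    have hex : ∀ w : c.support, ∃ α, (w : E) ∈ Set.range ⇑(P α) :=
      fun w => Set.mem_iUnion.1 (hsupp w.2)
    choose A hA using hex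
    set g : c.support → E := fun w => |c ↑w • (w : E)| with hgdef
    have hgmem : ∀ w, g w ∈ Set.range ⇑(P (A w)) := by
      intro w
      obtain ⟨y, hy⟩ := hA w
      have hmem : c ↑w • (w : E) ∈ Set.range ⇑(P (A w)) :=
        ⟨c ↑w • y, by rw [map_smul, hy]⟩
      exact ⟨|c ↑w • (w : E)|, ((hP (A w)).abs_mem_range hmem).symm⟩
    have hg0 : ∀ w, 0 ≤ g w := fun w => abs_nonneg _
    have hu_eq : u = ∑ w ∈ c.support.attach, c ↑w • (w : E) := by
      rw [← hsum, Finsupp.sum]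
      exact (Finset.sum_attach c.support fun a => c a • a).symm
    have habs_u : |u| ≤ ∑ w ∈ c.support.attach, g w := by
      rw [hu_eq]; exact aux_abs_sum_le _ _
    have hbound : ∀ γ, ‖|x γ| ⊓ v‖ ≤
        (∑ w ∈ c.support.attach, ‖|P (A w) (x γ)| ⊓ g w‖) + ‖v - u‖ := by
      intro γ
      have key : |x γ| ⊓ v ≤
          (∑ w ∈ c.support.attach, |P (A w) (x γ)| ⊓ g w) + |v - u| := by
        have s1 : |x γ| ⊓ v ≤ |x γ| ⊓ |u| + |v - u| := by
          have hv' : v ≤ |u| + |v - u| := by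
            calc v = u + (v - u) := by abel
              _ ≤ |u| + |v - u| := add_le_add (le_abs_self u) (le_abs_self _)
          calc |x γ| ⊓ v ≤ |x γ| ⊓ (|u| + |v - u|) := inf_le_inf_left _ hv'
            _ ≤ |x γ| ⊓ |u| + |v - u| := aux_inf_add_le' _ _ (abs_nonneg _)
        have s2 : |x γ| ⊓ |u| ≤ ∑ w ∈ c.support.attach, |x γ| ⊓ g w := by
          calc |x γ| ⊓ |u| ≤ |x γ| ⊓ (∑ w ∈ c.support.attach, g w) :=
                inf_le_inf_left _ habs_u
            _ ≤ _ := aux_inf_sum_le (abs_nonneg _) _ _ (fun w _ => hg0 w)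
        have s3 : ∀ w ∈ c.support.attach, |x γ| ⊓ g w ≤ |P (A w) (x γ)| ⊓ g w :=
          fun w _ => (hP (A w)).inf_le_proj_inf (hgmem w) (hg0 w) (x γ)
        calc |x γ| ⊓ v ≤ |x γ| ⊓ |u| + |v - u| := s1
          _ ≤ (∑ w ∈ c.support.attach, |x γ| ⊓ g w) + |v - u| := add_le_add_left s2 _
          _ ≤ (∑ w ∈ c.support.attach, |P (A w) (x γ)| ⊓ g w) + |v - u| :=
              add_le_add_left (Finset.sum_le_sum s3) _
      have h0 : 0 ≤ |x γ| ⊓ v := le_inf (abs_nonneg _) hv0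
      calc ‖|x γ| ⊓ v‖
          ≤ ‖(∑ w ∈ c.support.attach, |P (A w) (x γ)| ⊓ g w) + |v - u|‖ := by
            refine HasSolidNorm.solid ?_
            rw [abs_of_nonneg h0, abs_of_nonneg (le_trans h0 key)]
            exact key
        _ ≤ ‖∑ w ∈ c.support.attach, |P (A w) (x γ)| ⊓ g w‖ + ‖|v - u|‖ :=
            norm_add_le _ _
        _ ≤ (∑ w ∈ c.support.attach, ‖|P (A w) (x γ)| ⊓ g w‖) + ‖v - u‖ :=
            add_le_add (norm_sum_le _ _) (le_of_eq (norm_abs_eq_norm _))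
    have hsumT : Tendsto
        (fun γ => ∑ w ∈ c.support.attach, ‖|P (A w) (x γ)| ⊓ g w‖) atTop (nhds 0) := by
      have := tendsto_finset_sum (f := fun w γ => ‖|P (A w) (x γ)| ⊓ g w‖)
        c.support.attach (fun w _ => h (A w) (g w) (hgmem w) (hg0 w))
      simpa using this
    have hev : ∀ᶠ γ in atTop,
        (∑ w ∈ c.support.attach, ‖|P (A w) (x γ)| ⊓ g w‖) < ε/2 :=
      hsumT.eventually_lt_const (by positivity)
    filter_upwards [hev] with γ hγ
    rw [Real.dist_eq, sub_zero, abs_of_nonneg (norm_nonneg _)]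
    calc ‖|x γ| ⊓ v‖ ≤ _ + ‖v - u‖ := hbound γ
      _ < ε/2 + ε/2 := add_lt_add hγ (by rwa [← dist_eq_norm])
      _ = ε := add_halves ε
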